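/- Let R be a commutative ring with identity and n ≥ 3 an integer. For A ∈ GL_n(R), let h(A) denote the block-diagonal 2n×2n matrix diag(A, (Aᵀ)^{−1}) (the hyperbolic embedding). Then h(A) ∈ Sp_{2n}(R) for every A ∈ GL_n(R), h maps E_n(R) into the elementary symplectic group Ep_{2n}(R), and the smallest normal subgroup of Ep_{2n}(R) containing the set {h(A) : A ∈ E_n(R)} is Ep_{2n}(R) itself; that is, Ep_{2n}(R) is normally generated by the hyperbolic image of E_n(R). -/

import Mathlib

open Matrix

namespace Paper

/-! ### Generalities -/

lemma one_add_mul_aux {M : Type*} [Ring M] {x y : M} (h1 : x + y = 0) (h2 : x * y = 0) :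
    (1 + x) * (1 + y) = 1 := by
  have h : (1 + x) * (1 + y) = 1 + (x + y) + x * y := by noncomm_ring
  rw [h, h1, h2, add_zero, add_zero]

/-- The group of self-homeomorphisms of a topological space, under composition. -/
instance homeomorphGroup (X : Type*) [TopologicalSpace X] : Group (X ≃ₜ X) where
  mul a b := b.trans a
  one := Homeomorph.refl X
  inv := Homeomorph.symm
  mul_assoc a b c := rfl
  one_mul a := Homeomorph.ext fun x => rfl
  mul_one a := Homeomorph.ext fun x => rfl
  inv_mul_cancel a := Homeomorph.ext fun x => a.symm_apply_apply x

section Elementary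

variable (R : Type*) [Ring R]

lemma stdBasis_cancel (n : ℕ) (i j : Fin n) (a : R) :
    Matrix.single i j a + Matrix.single i j (-a) = 0 := by
  rw [← Matrix.single_add, add_neg_cancel, Matrix.single_zero]

/-- The elementary matrix `e_{ij}(r) = 1 + r·E_{ij}` as an invertible matrix,
i.e. an element of `GL_n(R)`. -/
def elemGL (n : ℕ) (i j : Fin n) (hij : i ≠ j) (r : R) : (Matrix (Fin n) (Fin n) R)ˣ where
  val := 1 + Matrix.single i j r
  inv := 1 + Matrix.single i j (-r)
  val_inv := one_add_mul_aux (stdBasis_cancel R n i j r)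
    (Matrix.single_mul_single_of_ne (c := r) i j _ (Ne.symm hij) (-r))
  inv_val := one_add_mul_aux
    (by have := stdBasis_cancel R n i j (-r); rwa [neg_neg] at this)
    (Matrix.single_mul_single_of_ne (c := -r) i j _ (Ne.symm hij) r)

/-- The elementary group `E_n(R)`: the subgroup of `GL_n(R)` generated by all
elementary matrices. -/
def ElementaryGroup (n : ℕ) : Subgroup (Matrix (Fin n) (Fin n) R)ˣ :=
  Subgroup.closure { A | ∃ (i j : Fin n) (hij : i ≠ j) (r : R), A = elemGL R n i j hij r }

lemma elemGL_mem (n : ℕ) (i j : Fin n) (hij : i ≠ j) (r : R) :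
    elemGL R n i j hij r ∈ ElementaryGroup R n :=
  Subgroup.subset_closure ⟨i, j, hij, r, rfl⟩

/-- The diagonal matrix with `-1` at places `i`, `j` and `1` elsewhere. -/
def negPairDiag (n : ℕ) (i j : Fin n) : Matrix (Fin n) (Fin n) R :=
  Matrix.diagonal fun k => if k = i ∨ k = j then -1 else 1

lemma negPairDiag_mul_self (n : ℕ) (i j : Fin n) :
    negPairDiag R n i j * negPairDiag R n i j = 1 := by
  rw [negPairDiag, Matrix.diagonal_mul_diagonal]
  have h : (fun k => (if k = i ∨ k = j then (-1 : R) else 1) *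
      (if k = i ∨ k = j then (-1 : R) else 1)) = fun _ => (1 : R) := by
    funext k
    by_cases h : k = i ∨ k = j <;> simp [h]
  rw [h, Matrix.diagonal_one]

/-- The matrix `negPairDiag` as an invertible matrix. -/
def negPairGL (n : ℕ) (i j : Fin n) : (Matrix (Fin n) (Fin n) R)ˣ :=
  ⟨negPairDiag R n i j, negPairDiag R n i j,
    negPairDiag_mul_self R n i j, negPairDiag_mul_self R n i j⟩

/-- The matrix `A_{i,i+1}` (0-indexed: diagonal entries `i` and `i+1` equal `-1`). -/
def APair (n : ℕ) (i : Fin (n - 1)) : (Matrix (Fin n) (Fin n) R)ˣ :=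
  negPairGL R n ⟨(i : ℕ), by have := i.isLt; omega⟩ ⟨(i : ℕ) + 1, by have := i.isLt; omega⟩

/-- `E_n(R, 2R)`: the smallest normal subgroup of `E_n(R)` containing all elementary
matrices `e_{ij}(s)` with `s ∈ 2R`. -/
def RelElementaryGroup (n : ℕ) : Subgroup ↥(ElementaryGroup R n) :=
  Subgroup.normalClosure
    { x : ↥(ElementaryGroup R n) | ∃ (i j : Fin n) (hij : i ≠ j) (r : R),
        x.val = elemGL R n i j hij (2 * r) }

end Elementary

section Symplectic

variable (S : Type*) [CommRing S]

/-- The index involution `σ` on `{0, …, 2n-1}`: `σk = k + n` if `k < n`, else `σk = k - n`. -/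
def sigIdx (n : ℕ) (k : Fin (2 * n)) : Fin (2 * n) :=
  if h : (k : ℕ) < n then ⟨(k : ℕ) + n, by omega⟩
  else ⟨(k : ℕ) - n, by have := k.isLt; omega⟩

lemma sigIdx_ne (n : ℕ) (k : Fin (2 * n)) : sigIdx n k ≠ k := by
  have hk := k.isLt
  unfold sigIdx
  split_ifs with h <;>
    · intro hEq
      have h2 := congrArg Fin.val hEq
      simp only [Fin.val_mk] at h2 -- may need adjusting
      omega

lemma sigIdx_inj (n : ℕ) {k l : Fin (2 * n)} (h : k ≠ l) : sigIdx n k ≠ sigIdx n l := by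
  have hk := k.isLt
  have hl := l.isLt
  have hkl : (k : ℕ) ≠ (l : ℕ) := fun hc => h (Fin.ext hc)
  unfold sigIdx
  split_ifs with h1 h2 h2 <;>
    · intro hEq
      have h3 := congrArg Fin.val hEq
      simp only [Fin.val_mk] at h3
      omega

/-- The symplectic elementary matrix `ρ_{ij}(a)`, as a matrix.  When `j = σi` it is
`1 + a E_{i,σi}`; otherwise it is `1 + a E_{ij} - δ a E_{σj,σi}` where `δ = 1` if `i, j`
are on the same side of `n` and `δ = -1` otherwise. -/
def symElemMat (n : ℕ) (i j : Fin (2 * n)) (a : S) : Matrix (Fin (2 * n)) (Fin (2 * n)) S :=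
  if j = sigIdx n i then 1 + Matrix.single i j a
  else 1 + Matrix.single i j a -
    Matrix.single (sigIdx n j) (sigIdx n i)
      ((if ((i : ℕ) < n ↔ (j : ℕ) < n) then 1 else -1) * a)

lemma symElemMat_mul_neg (n : ℕ) (i j : Fin (2 * n)) (hij : i ≠ j) (a : S) :
    symElemMat S n i j a * symElemMat S n i j (-a) = 1 := by
  unfold symElemMat
  set d : S := if ((i : ℕ) < n ↔ (j : ℕ) < n) then 1 else -1 with hd
  split_ifs with h
  · exact one_add_mul_aux (stdBasis_cancel S _ i j a)
      (Matrix.single_mul_single_of_ne (c := a) i j _ (Ne.symm hij) (-a))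
  · rw [add_sub_assoc, add_sub_assoc]
    apply one_add_mul_aux
    · have c1 := stdBasis_cancel S _ i j a
      have c2 := stdBasis_cancel S _ (sigIdx n j) (sigIdx n i) (d * a)
      rw [mul_neg]
      calc Matrix.single i j a - Matrix.single (sigIdx n j) (sigIdx n i) (d * a) +
            (Matrix.single i j (-a) - Matrix.single (sigIdx n j) (sigIdx n i) (-(d * a)))
          = (Matrix.single i j a + Matrix.single i j (-a)) -
            (Matrix.single (sigIdx n j) (sigIdx n i) (d * a) +
              Matrix.single (sigIdx n j) (sigIdx n i) (-(d * a))) := by abel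
        _ = 0 := by rw [c1, c2, sub_zero]
    · simp only [sub_mul, mul_sub]
      rw [Matrix.single_mul_single_of_ne (c := a) i j _ (Ne.symm hij) (-a),
        Matrix.single_mul_single_of_ne (c := a) i j _ (Ne.symm (sigIdx_ne n j)) (d * -a),
        Matrix.single_mul_single_of_ne (c := d * a) (sigIdx n j) (sigIdx n i) _ (sigIdx_ne n i) (-a),
        Matrix.single_mul_single_of_ne (c := d * a) (sigIdx n j) (sigIdx n i) _
          (sigIdx_inj n hij) (d * -a)]
      simp

/-- The symplectic elementary matrix `ρ_{ij}(a)` as an invertible matrix. -/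
def symElemGL (n : ℕ) (i j : Fin (2 * n)) (hij : i ≠ j) (a : S) :
    (Matrix (Fin (2 * n)) (Fin (2 * n)) S)ˣ where
  val := symElemMat S n i j a
  inv := symElemMat S n i j (-a)
  val_inv := symElemMat_mul_neg S n i j hij a
  inv_val := by have := symElemMat_mul_neg S n i j hij (-a); rwa [neg_neg] at this

/-- The elementary symplectic group `Ep_{2n}(S)`, generated by all symplectic
elementary matrices. -/
def EpGroup (n : ℕ) : Subgroup (Matrix (Fin (2 * n)) (Fin (2 * n)) S)ˣ :=
  Subgroup.closure
    { A | ∃ (i j : Fin (2 * n)) (hij : i ≠ j) (a : S), A = symElemGL S n i j hij a }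

/-- The matrix `J = [[0, I_n], [-I_n, 0]]` of the standard symplectic form. -/
def Jmat (n : ℕ) : Matrix (Fin (2 * n)) (Fin (2 * n)) S :=
  Matrix.of fun i j =>
    if (i : ℕ) + n = (j : ℕ) then 1 else if (j : ℕ) + n = (i : ℕ) then -1 else 0

/-- The symplectic group `Sp_{2n}(S)`: invertible `2n × 2n` matrices `M` with
`Mᵀ * J * M = J`. -/
def SpGroup (n : ℕ) : Subgroup (Matrix (Fin (2 * n)) (Fin (2 * n)) S)ˣ where
  carrier := { M | (↑M : Matrix (Fin (2 * n)) (Fin (2 * n)) S)ᵀ * Jmat S n * ↑M = Jmat S n }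
  one_mem' := by simp
  mul_mem' := by
    intro a b ha hb
    show (↑(a * b) : Matrix (Fin (2 * n)) (Fin (2 * n)) S)ᵀ * Jmat S n * (↑(a * b) : Matrix (Fin (2 * n)) (Fin (2 * n)) S) = Jmat S n
    rw [Units.val_mul, Matrix.transpose_mul]
    calc (↑b : Matrix (Fin (2*n)) (Fin (2*n)) S)ᵀ * (↑a : Matrix (Fin (2*n)) (Fin (2*n)) S)ᵀ *
          Jmat S n * (↑a * ↑b)
        = (↑b : Matrix (Fin (2*n)) (Fin (2*n)) S)ᵀ *
            ((↑a : Matrix (Fin (2*n)) (Fin (2*n)) S)ᵀ * Jmat S n * ↑a) * ↑b := by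
          noncomm_ring
      _ = (↑b : Matrix (Fin (2*n)) (Fin (2*n)) S)ᵀ * Jmat S n * ↑b := by rw [ha]
      _ = Jmat S n := hb
  inv_mem' := by
    intro a ha
    have ha' : (↑a : Matrix (Fin (2 * n)) (Fin (2 * n)) S)ᵀ * Jmat S n *
        (↑a : Matrix (Fin (2 * n)) (Fin (2 * n)) S) = Jmat S n := ha
    show ((a⁻¹ : (Matrix (Fin (2 * n)) (Fin (2 * n)) S)ˣ) :
        Matrix (Fin (2 * n)) (Fin (2 * n)) S)ᵀ * Jmat S n *
        ((a⁻¹ : (Matrix (Fin (2 * n)) (Fin (2 * n)) S)ˣ) :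
        Matrix (Fin (2 * n)) (Fin (2 * n)) S) = Jmat S n
    set A : Matrix (Fin (2 * n)) (Fin (2 * n)) S := ↑a with hA
    set B : Matrix (Fin (2 * n)) (Fin (2 * n)) S := ((a⁻¹ :
        (Matrix (Fin (2 * n)) (Fin (2 * n)) S)ˣ) : Matrix (Fin (2 * n)) (Fin (2 * n)) S) with hB
    have h1 : A * B = 1 := a.mul_inv
    calc Bᵀ * Jmat S n * B
        = Bᵀ * (Aᵀ * Jmat S n * A) * B := by rw [ha']
      _ = (A * B)ᵀ * Jmat S n * (A * B) := by rw [Matrix.transpose_mul]; noncomm_ring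
      _ = Jmat S n := by rw [h1]; simp

end Symplectic

section Extra

variable (R : Type*) [Ring R]

/-- Index of the `(2i-1)`-th row (1-indexed), i.e. `2i` 0-indexed. -/
def bIdx0 (k : ℕ) (i : Fin k) : Fin (2 * k) := ⟨2 * (i : ℕ), by have := i.isLt; omega⟩

def bIdx1 (k : ℕ) (i : Fin k) : Fin (2 * k) := ⟨2 * (i : ℕ) + 1, by have := i.isLt; omega⟩

lemma bIdx_ne (k : ℕ) (i : Fin k) : bIdx0 k i ≠ bIdx1 k i := by
  simp only [bIdx0, bIdx1, ne_eq, Fin.mk.injEq]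
  omega

/-- The matrix `B_i = e_{2i-1,2i}(1) e_{2i,2i-1}(-1) e_{2i-1,2i}(1) e_{2i,2i-1}(-1)`
(1-indexed) in `E_{2k}(R)`. -/
def Bmat (k : ℕ) (i : Fin k) : (Matrix (Fin (2 * k)) (Fin (2 * k)) R)ˣ :=
  elemGL R (2 * k) (bIdx0 k i) (bIdx1 k i) (bIdx_ne k i) 1 *
  elemGL R (2 * k) (bIdx1 k i) (bIdx0 k i) (bIdx_ne k i).symm (-1) *
  elemGL R (2 * k) (bIdx0 k i) (bIdx1 k i) (bIdx_ne k i) 1 *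
  elemGL R (2 * k) (bIdx1 k i) (bIdx0 k i) (bIdx_ne k i).symm (-1)

end Extra

section SymplecticExtra

variable (S : Type*) [CommRing S]

def cIdx0 (n : ℕ) (i : Fin n) : Fin (2 * n) := ⟨(i : ℕ), by have := i.isLt; omega⟩

def cIdx1 (n : ℕ) (i : Fin n) : Fin (2 * n) := ⟨n + (i : ℕ), by have := i.isLt; omega⟩

lemma cIdx_ne (n : ℕ) (i : Fin n) : cIdx0 n i ≠ cIdx1 n i := by
  have := i.pos
  simp only [cIdx0, cIdx1, ne_eq, Fin.mk.injEq]
  omega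

/-- The matrix `C_i = ρ_{i,n+i}(1) ρ_{n+i,i}(-1) ρ_{i,n+i}(1) ρ_{n+i,i}(-1)` in
`Sp_{2n}(S)`. -/
def Cmat (n : ℕ) (i : Fin n) : (Matrix (Fin (2 * n)) (Fin (2 * n)) S)ˣ :=
  symElemGL S n (cIdx0 n i) (cIdx1 n i) (cIdx_ne n i) 1 *
  symElemGL S n (cIdx1 n i) (cIdx0 n i) (cIdx_ne n i).symm (-1) *
  symElemGL S n (cIdx0 n i) (cIdx1 n i) (cIdx_ne n i) 1 *
  symElemGL S n (cIdx1 n i) (cIdx0 n i) (cIdx_ne n i).symm (-1)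

/-- The equivalence `Fin n ⊕ Fin n ≃ Fin (2 * n)`. -/
def finDouble (n : ℕ) : Fin n ⊕ Fin n ≃ Fin (2 * n) :=
  finSumFinEquiv.trans (finCongr (two_mul n).symm)

/-- The block-diagonal matrix `diag(A, B)` as a `2n × 2n` matrix. -/
def blockDiag2 (n : ℕ) (A B : Matrix (Fin n) (Fin n) S) :
    Matrix (Fin (2 * n)) (Fin (2 * n)) S :=
  Matrix.reindex (finDouble n) (finDouble n) (Matrix.fromBlocks A 0 0 B)

lemma blockDiag2_mul (n : ℕ) (A B A' B' : Matrix (Fin n) (Fin n) S) :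
    blockDiag2 S n A B * blockDiag2 S n A' B' = blockDiag2 S n (A * A') (B * B') := by
  unfold blockDiag2
  rw [Matrix.reindex_apply, Matrix.reindex_apply, Matrix.reindex_apply,
    Matrix.submatrix_mul_equiv, Matrix.fromBlocks_multiply]
  simp

lemma blockDiag2_one (n : ℕ) : blockDiag2 S n 1 1 = 1 := by
  unfold blockDiag2
  rw [Matrix.reindex_apply, Matrix.fromBlocks_one, Matrix.submatrix_one_equiv]

/-- The hyperbolic embedding `A ↦ diag(A, (Aᵀ)⁻¹) = diag(A, (A⁻¹)ᵀ)` from `GL_n(S)`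
to `GL_{2n}(S)`. -/
def hypGL (n : ℕ) (A : (Matrix (Fin n) (Fin n) S)ˣ) :
    (Matrix (Fin (2 * n)) (Fin (2 * n)) S)ˣ where
  val := blockDiag2 S n ↑A ((↑(A⁻¹) : Matrix (Fin n) (Fin n) S)ᵀ)
  inv := blockDiag2 S n ↑(A⁻¹) ((↑A : Matrix (Fin n) (Fin n) S)ᵀ)
  val_inv := by
    rw [blockDiag2_mul, ← Matrix.transpose_mul, A.mul_inv, Matrix.transpose_one,
      blockDiag2_one]
  inv_val := by
    rw [blockDiag2_mul, ← Matrix.transpose_mul, A.inv_mul, Matrix.transpose_one,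
      blockDiag2_one]

end SymplecticExtra


section Aux19

variable (S : Type*) [CommRing S]

lemma stdBasisMatrix_neg {m' n' : Type*} [DecidableEq m'] [DecidableEq n'] (i : m') (j : n')
    (a : S) : Matrix.single i j (-a) = -Matrix.single i j a := by
  have := smul_single (-1 : S) i j a
  simpa [neg_smul] using this.symm

lemma sigIdx_c0 (n : ℕ) (i : Fin n) : sigIdx n (cIdx0 n i) = cIdx1 n i := by
  have := i.isLt
  simp only [sigIdx, cIdx0, cIdx1]
  simp only [this, ↓reduceDIte]
  exact Fin.ext (by simp [Nat.add_comm])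

lemma sigIdx_c1 (n : ℕ) (i : Fin n) : sigIdx n (cIdx1 n i) = cIdx0 n i := by
  have := i.isLt
  simp only [sigIdx, cIdx0, cIdx1]
  simp only [show ¬ (n + (i : ℕ) < n) by omega, ↓reduceDIte]
  exact Fin.ext (by simp)

lemma c0_ne_c1 (n : ℕ) (i j : Fin n) : cIdx0 n i ≠ cIdx1 n j := by
  have := i.isLt
  simp only [cIdx0, cIdx1, ne_eq, Fin.mk.injEq]
  omega

lemma c1_ne_c0 (n : ℕ) (i j : Fin n) : cIdx1 n i ≠ cIdx0 n j := by
  have := j.isLt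
  simp only [cIdx0, cIdx1, ne_eq, Fin.mk.injEq]
  omega

lemma c0_inj (n : ℕ) (i j : Fin n) : cIdx0 n i = cIdx0 n j ↔ i = j := by
  simp [cIdx0, Fin.ext_iff]

lemma c1_inj (n : ℕ) (i j : Fin n) : cIdx1 n i = cIdx1 n j ↔ i = j := by
  simp [cIdx1, Fin.ext_iff]

lemma c0_lt (n : ℕ) (i : Fin n) : ((cIdx0 n i : Fin (2*n)) : ℕ) < n := i.isLt

lemma c1_not_lt (n : ℕ) (i : Fin n) : ¬ ((cIdx1 n i : Fin (2*n)) : ℕ) < n := by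
  simp [cIdx1]

lemma c0_ne_c0 (n : ℕ) {i j : Fin n} (h : i ≠ j) : cIdx0 n i ≠ cIdx0 n j := by
  simpa [c0_inj] using h

lemma c1_ne_c1 (n : ℕ) {i j : Fin n} (h : i ≠ j) : cIdx1 n i ≠ cIdx1 n j := by
  simpa [c1_inj] using h

/-- value of the upper-left type elementary symplectic matrix -/
lemma symA (n : ℕ) (i j : Fin n) (a : S) (hij : i ≠ j) :
    symElemMat S n (cIdx0 n i) (cIdx0 n j) a =
      1 + Matrix.single (cIdx0 n i) (cIdx0 n j) a
        - Matrix.single (cIdx1 n j) (cIdx1 n i) a := by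
  simp only [symElemMat, sigIdx_c0]
  rw [if_neg (c0_ne_c1 n j i), if_pos (iff_of_true (c0_lt n i) (c0_lt n j)), one_mul]

lemma symB (n : ℕ) (i j : Fin n) (a : S) (hij : i ≠ j) :
    symElemMat S n (cIdx1 n i) (cIdx1 n j) a =
      1 + Matrix.single (cIdx1 n i) (cIdx1 n j) a
        - Matrix.single (cIdx0 n j) (cIdx0 n i) a := by
  simp only [symElemMat, sigIdx_c1]
  rw [if_neg (c1_ne_c0 n j i), if_pos (iff_of_false (c1_not_lt n i) (c1_not_lt n j)), one_mul]

lemma symC (n : ℕ) (i j : Fin n) (a : S) (hij : i ≠ j) :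
    symElemMat S n (cIdx0 n i) (cIdx1 n j) a =
      1 + Matrix.single (cIdx0 n i) (cIdx1 n j) a
        + Matrix.single (cIdx0 n j) (cIdx1 n i) a := by
  simp only [symElemMat, sigIdx_c0, sigIdx_c1]
  rw [if_neg (c1_ne_c1 n (Ne.symm hij)), if_neg (fun h => (c1_not_lt n j) (h.mp (c0_lt n i))),
    neg_one_mul, stdBasisMatrix_neg, sub_neg_eq_add]

lemma symD (n : ℕ) (i j : Fin n) (a : S) (hij : i ≠ j) :
    symElemMat S n (cIdx1 n i) (cIdx0 n j) a =
      1 + Matrix.single (cIdx1 n i) (cIdx0 n j) a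
        + Matrix.single (cIdx1 n j) (cIdx0 n i) a := by
  simp only [symElemMat, sigIdx_c1, sigIdx_c0]
  rw [if_neg (c0_ne_c0 n (Ne.symm hij)), if_neg (fun h => (c1_not_lt n i) (h.mpr (c0_lt n j))),
    neg_one_mul, stdBasisMatrix_neg, sub_neg_eq_add]

lemma symS (n : ℕ) (i : Fin n) (a : S) :
    symElemMat S n (cIdx0 n i) (cIdx1 n i) a =
      1 + Matrix.single (cIdx0 n i) (cIdx1 n i) a := by
  rw [symElemMat, if_pos (sigIdx_c0 n i).symm]

lemma symT (n : ℕ) (i : Fin n) (a : S) :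
    symElemMat S n (cIdx1 n i) (cIdx0 n i) a =
      1 + Matrix.single (cIdx1 n i) (cIdx0 n i) a := by
  rw [symElemMat, if_pos (sigIdx_c1 n i).symm]

lemma rel_mix1 (n : ℕ) (i j k : Fin n) (hij : i ≠ j) (hik : i ≠ k) (hjk : j ≠ k) (a b : S) :
    (1 + Matrix.single (cIdx0 n i) (cIdx0 n k) a - Matrix.single (cIdx1 n k) (cIdx1 n i) a) *
      (1 + Matrix.single (cIdx0 n k) (cIdx1 n j) b + Matrix.single (cIdx0 n j) (cIdx1 n k) b) =
    (1 + Matrix.single (cIdx0 n i) (cIdx1 n j) (a * b)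
        + Matrix.single (cIdx0 n j) (cIdx1 n i) (a * b)) *
      ((1 + Matrix.single (cIdx0 n k) (cIdx1 n j) b + Matrix.single (cIdx0 n j) (cIdx1 n k) b) *
        (1 + Matrix.single (cIdx0 n i) (cIdx0 n k) a - Matrix.single (cIdx1 n k) (cIdx1 n i) a)) := by
  simp only [mul_add, add_mul, mul_sub, sub_mul, mul_one, one_mul, zero_mul, mul_zero,
    add_zero, zero_add, sub_zero, zero_sub,
    Matrix.single_mul_single_same, Matrix.single_mul_single_of_ne,
    c0_ne_c1, c1_ne_c0, c0_inj, c1_inj, ne_eq,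
    hij, hik, hjk, hij.symm, hik.symm, hjk.symm, not_false_eq_true]
  rw [mul_comm b a]
  abel

lemma rel_mix2 (n : ℕ) (i j k : Fin n) (hij : i ≠ j) (hik : i ≠ k) (hjk : j ≠ k) (a b : S) :
    (1 + Matrix.single (cIdx1 n i) (cIdx1 n k) a - Matrix.single (cIdx0 n k) (cIdx0 n i) a) *
      (1 + Matrix.single (cIdx1 n k) (cIdx0 n j) b + Matrix.single (cIdx1 n j) (cIdx0 n k) b) =
    (1 + Matrix.single (cIdx1 n i) (cIdx0 n j) (a * b)
        + Matrix.single (cIdx1 n j) (cIdx0 n i) (a * b)) *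
      ((1 + Matrix.single (cIdx1 n k) (cIdx0 n j) b + Matrix.single (cIdx1 n j) (cIdx0 n k) b) *
        (1 + Matrix.single (cIdx1 n i) (cIdx1 n k) a - Matrix.single (cIdx0 n k) (cIdx0 n i) a)) := by
  simp only [mul_add, add_mul, mul_sub, sub_mul, mul_one, one_mul, zero_mul, mul_zero,
    add_zero, zero_add, sub_zero, zero_sub,
    Matrix.single_mul_single_same, Matrix.single_mul_single_of_ne,
    c0_ne_c1, c1_ne_c0, c0_inj, c1_inj, ne_eq,
    hij, hik, hjk, hij.symm, hik.symm, hjk.symm, not_false_eq_true]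
  rw [mul_comm b a]
  abel

lemma rel_short1 (n : ℕ) (i j : Fin n) (hij : i ≠ j) (a b : S) :
    (1 + Matrix.single (cIdx0 n i) (cIdx0 n j) a - Matrix.single (cIdx1 n j) (cIdx1 n i) a) *
      (1 + Matrix.single (cIdx0 n j) (cIdx1 n j) b) =
    ((1 + Matrix.single (cIdx0 n i) (cIdx1 n j) (a * b)
        + Matrix.single (cIdx0 n j) (cIdx1 n i) (a * b)) *
      (1 + Matrix.single (cIdx0 n i) (cIdx1 n i) (a * (a * b)))) *
      ((1 + Matrix.single (cIdx0 n j) (cIdx1 n j) b) *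
        (1 + Matrix.single (cIdx0 n i) (cIdx0 n j) a - Matrix.single (cIdx1 n j) (cIdx1 n i) a)) := by
  simp only [mul_add, add_mul, mul_sub, sub_mul, mul_one, one_mul, zero_mul, mul_zero,
    add_zero, zero_add, sub_zero, zero_sub,
    Matrix.single_mul_single_same, Matrix.single_mul_single_of_ne,
    c0_ne_c1, c1_ne_c0, c0_inj, c1_inj, ne_eq,
    hij, hij.symm, not_false_eq_true]
  rw [mul_comm b a, show a * b * a = a * (a * b) by ring]
  abel

lemma rel_short2 (n : ℕ) (i j : Fin n) (hij : i ≠ j) (a b : S) :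
    (1 + Matrix.single (cIdx1 n i) (cIdx1 n j) a - Matrix.single (cIdx0 n j) (cIdx0 n i) a) *
      (1 + Matrix.single (cIdx1 n j) (cIdx0 n j) b) =
    ((1 + Matrix.single (cIdx1 n i) (cIdx0 n j) (a * b)
        + Matrix.single (cIdx1 n j) (cIdx0 n i) (a * b)) *
      (1 + Matrix.single (cIdx1 n i) (cIdx0 n i) (a * (a * b)))) *
      ((1 + Matrix.single (cIdx1 n j) (cIdx0 n j) b) *
        (1 + Matrix.single (cIdx1 n i) (cIdx1 n j) a - Matrix.single (cIdx0 n j) (cIdx0 n i) a)) := by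
  simp only [mul_add, add_mul, mul_sub, sub_mul, mul_one, one_mul, zero_mul, mul_zero,
    add_zero, zero_add, sub_zero, zero_sub,
    Matrix.single_mul_single_same, Matrix.single_mul_single_of_ne,
    c0_ne_c1, c1_ne_c0, c0_inj, c1_inj, ne_eq,
    hij, hij.symm, not_false_eq_true]
  rw [mul_comm b a, show a * b * a = a * (a * b) by ring]
  abel

lemma comm_of_rel {G : Type*} [Group G] {u v w : G} (h : u * v = w * (v * u)) :
    w = u * v * u⁻¹ * v⁻¹ := by
  have h2 : w = (u * v) * (v * u)⁻¹ := by rw [h, mul_inv_cancel_right]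
  rw [h2, _root_.mul_inv_rev]
  group

lemma exists_third (n : ℕ) (hn : 3 ≤ n) (i j : Fin n) : ∃ k : Fin n, k ≠ i ∧ k ≠ j := by
  have hex : ∃ m : ℕ, m < 3 ∧ m ≠ (i : ℕ) ∧ m ≠ (j : ℕ) := by
    by_cases h0 : 0 = (i : ℕ) ∨ 0 = (j : ℕ)
    · by_cases h1 : 1 = (i : ℕ) ∨ 1 = (j : ℕ)
      · exact ⟨2, by omega, by omega, by omega⟩
      · exact ⟨1, by omega, by omega, by omega⟩
    · exact ⟨0, by omega, by omega, by omega⟩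
  obtain ⟨m, hm3, hmi, hmj⟩ := hex
  exact ⟨⟨m, by omega⟩, fun h => hmi (congrArg Fin.val h), fun h => hmj (congrArg Fin.val h)⟩

lemma stdBasisMatrix_transpose {m' n' : Type*} [DecidableEq m'] [DecidableEq n'] (i : m')
    (j : n') (a : S) : (Matrix.single i j a)ᵀ = Matrix.single j i a := by
  ext p q
  simp [Matrix.single, Matrix.transpose_apply, and_comm]

lemma finDouble_inl (n : ℕ) (i : Fin n) : finDouble n (Sum.inl i) = cIdx0 n i := by
  simp [finDouble, cIdx0, Fin.ext_iff]

lemma finDouble_inr (n : ℕ) (i : Fin n) : finDouble n (Sum.inr i) = cIdx1 n i := by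
  simp [finDouble, cIdx1, Fin.ext_iff]
  omega

lemma c0_val (n : ℕ) (i : Fin n) : ((cIdx0 n i : Fin (2 * n)) : ℕ) = (i : ℕ) := rfl

lemma c1_val (n : ℕ) (i : Fin n) : ((cIdx1 n i : Fin (2 * n)) : ℕ) = n + (i : ℕ) := rfl

lemma finDouble_symm_c0 (n : ℕ) (p : Fin n) : (finDouble n).symm (cIdx0 n p) = Sum.inl p := by
  rw [← finDouble_inl, Equiv.symm_apply_apply]

lemma finDouble_symm_c1 (n : ℕ) (p : Fin n) : (finDouble n).symm (cIdx1 n p) = Sum.inr p := by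
  rw [← finDouble_inr, Equiv.symm_apply_apply]

lemma blockDiag2_add (n : ℕ) (A A' B B' : Matrix (Fin n) (Fin n) S) :
    blockDiag2 S n (A + A') (B + B') = blockDiag2 S n A B + blockDiag2 S n A' B' := by
  unfold blockDiag2
  rw [Matrix.reindex_apply, Matrix.reindex_apply, Matrix.reindex_apply,
    show Matrix.fromBlocks (A + A') 0 0 (B + B')
        = Matrix.fromBlocks A 0 0 B + Matrix.fromBlocks A' (0 : Matrix (Fin n) (Fin n) S)
          (0 : Matrix (Fin n) (Fin n) S) B' from by rw [Matrix.fromBlocks_add, add_zero],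
    Matrix.submatrix_add]
  rfl

lemma blockDiag2_split (n : ℕ) (A B : Matrix (Fin n) (Fin n) S) :
    blockDiag2 S n A B = blockDiag2 S n A 0 + blockDiag2 S n 0 B := by
  rw [← blockDiag2_add, add_zero, zero_add]

lemma blockDiag2_std0 (n : ℕ) (i j : Fin n) (a : S) :
    blockDiag2 S n (Matrix.single i j a) 0 = Matrix.single (cIdx0 n i) (cIdx0 n j) a := by
  ext p q
  obtain ⟨p, rfl⟩ := (finDouble n).surjective p
  obtain ⟨q, rfl⟩ := (finDouble n).surjective q
  rcases p with p | p <;> rcases q with q | q <;>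
    simp [blockDiag2, Matrix.submatrix_apply, finDouble_inl, finDouble_inr,
      finDouble_symm_c0, finDouble_symm_c1, Matrix.single, c0_inj, c1_inj,
      c0_ne_c1, c1_ne_c0, (c0_ne_c1 n _ _).symm, (c1_ne_c0 n _ _).symm]

lemma blockDiag2_std1 (n : ℕ) (i j : Fin n) (a : S) :
    blockDiag2 S n 0 (Matrix.single i j a) = Matrix.single (cIdx1 n i) (cIdx1 n j) a := by
  ext p q
  obtain ⟨p, rfl⟩ := (finDouble n).surjective p
  obtain ⟨q, rfl⟩ := (finDouble n).surjective q
  rcases p with p | p <;> rcases q with q | q <;>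
    simp [blockDiag2, Matrix.submatrix_apply, finDouble_inl, finDouble_inr,
      finDouble_symm_c0, finDouble_symm_c1, Matrix.single, c0_inj, c1_inj,
      c0_ne_c1, c1_ne_c0, (c0_ne_c1 n _ _).symm, (c1_ne_c0 n _ _).symm]

lemma blockDiag2_transpose (n : ℕ) (A B : Matrix (Fin n) (Fin n) S) :
    (blockDiag2 S n A B)ᵀ = blockDiag2 S n Aᵀ Bᵀ := by
  unfold blockDiag2
  rw [Matrix.reindex_apply, Matrix.reindex_apply, Matrix.transpose_submatrix,
    Matrix.fromBlocks_transpose, Matrix.transpose_zero]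

lemma reindexD_mul (n : ℕ) (M N : Matrix (Fin n ⊕ Fin n) (Fin n ⊕ Fin n) S) :
    Matrix.reindex (finDouble n) (finDouble n) M * Matrix.reindex (finDouble n) (finDouble n) N
      = Matrix.reindex (finDouble n) (finDouble n) (M * N) := by
  rw [Matrix.reindex_apply, Matrix.reindex_apply, Matrix.reindex_apply,
    Matrix.submatrix_mul_equiv]

lemma Jmat_eq (n : ℕ) :
    Jmat S n = Matrix.reindex (finDouble n) (finDouble n)
      (Matrix.fromBlocks 0 1 (-1) 0) := by
  ext p q
  obtain ⟨p, rfl⟩ := (finDouble n).surjective p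
  obtain ⟨q, rfl⟩ := (finDouble n).surjective q
  rcases p with p | p <;> rcases q with q | q <;>
    simp only [Matrix.reindex_apply, Matrix.submatrix_apply, Equiv.symm_apply_apply,
      finDouble_inl, finDouble_inr, finDouble_symm_c0, finDouble_symm_c1, Jmat,
      Matrix.of_apply, c0_val, c1_val,
      Matrix.fromBlocks_apply₁₁, Matrix.fromBlocks_apply₁₂, Matrix.fromBlocks_apply₂₁,
      Matrix.fromBlocks_apply₂₂, Matrix.zero_apply, Matrix.one_apply, Matrix.neg_apply]
  · have h1 := p.isLt; have h2 := q.isLt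
    simp only [show ¬ ((p : ℕ) + n = q) by omega, show ¬ ((q : ℕ) + n = p) by omega, ↓reduceIte]
  · have h1 := p.isLt; have h2 := q.isLt
    by_cases h : p = q
    · subst h; simp only [show ((p : ℕ) + n = n + p) ↔ True from iff_true_intro (by omega),
        eq_self_iff_true, ↓reduceIte]
    · have hv : (p : ℕ) ≠ q := fun hc => h (Fin.ext hc)
      simp only [show ¬ ((p : ℕ) + n = n + q) by omega, show ¬ (n + (q : ℕ) + n = p) by omega, h,
        ↓reduceIte]
  · have h1 := p.isLt; have h2 := q.isLt
    by_cases h : p = q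
    · subst h; simp only [show ¬ (n + (p : ℕ) + n = p) by omega,
        show ((p : ℕ) + n = n + p) ↔ True from iff_true_intro (by omega),
        eq_self_iff_true, ↓reduceIte]
    · have hv : (p : ℕ) ≠ q := fun hc => h (Fin.ext hc)
      simp only [show ¬ (n + (p : ℕ) + n = q) by omega, show ¬ ((q : ℕ) + n = n + p) by omega, h,
        ↓reduceIte, neg_zero]
  · have h1 := p.isLt; have h2 := q.isLt
    simp only [show ¬ (n + (p : ℕ) + n = n + q) by omega, show ¬ (n + (q : ℕ) + n = n + p) by omega,
      ↓reduceIte]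

lemma hyp_mem_Sp (n : ℕ) (A : (Matrix (Fin n) (Fin n) S)ˣ) : hypGL S n A ∈ SpGroup S n := by
  have h1 : ((↑A : Matrix (Fin n) (Fin n) S)ᵀ) * ((↑A⁻¹ : Matrix (Fin n) (Fin n) S)ᵀ) = 1 := by
    rw [← Matrix.transpose_mul, Units.inv_mul, Matrix.transpose_one]
  have h2 : (↑A⁻¹ : Matrix (Fin n) (Fin n) S) * (↑A : Matrix (Fin n) (Fin n) S) = 1 :=
    Units.inv_mul A
  show ((hypGL S n A).val)ᵀ * Jmat S n * (hypGL S n A).val = Jmat S n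
  have hval : (hypGL S n A).val
      = blockDiag2 S n (↑A) ((↑A⁻¹ : Matrix (Fin n) (Fin n) S)ᵀ) := rfl
  rw [hval, blockDiag2_transpose, Matrix.transpose_transpose, Jmat_eq]
  unfold blockDiag2
  rw [reindexD_mul, reindexD_mul]
  congr 1
  have h1m : ((↑A : Matrix (Fin n) (Fin n) S)ᵀ) * (((↑A : Matrix (Fin n) (Fin n) S))⁻¹ᵀ) = 1 := by
    rw [← Matrix.coe_units_inv]; exact h1
  have h2m : ((↑A : Matrix (Fin n) (Fin n) S))⁻¹ * (↑A : Matrix (Fin n) (Fin n) S) = 1 := by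
    rw [← Matrix.coe_units_inv]; exact h2
  rw [Matrix.fromBlocks_multiply, Matrix.fromBlocks_multiply]
  simp [h1, h2, h1m, h2m]

lemma hyp_one (n : ℕ) : hypGL S n 1 = 1 := by
  apply Units.ext
  show blockDiag2 S n (↑(1 : (Matrix (Fin n) (Fin n) S)ˣ))
      ((↑((1 : (Matrix (Fin n) (Fin n) S)ˣ)⁻¹) : Matrix (Fin n) (Fin n) S)ᵀ) = 1
  rw [inv_one]
  simp only [Units.val_one, Matrix.transpose_one]
  exact blockDiag2_one S n

lemma hyp_mul (n : ℕ) (A B : (Matrix (Fin n) (Fin n) S)ˣ) :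
    hypGL S n (A * B) = hypGL S n A * hypGL S n B := by
  apply Units.ext
  show blockDiag2 S n (↑(A * B)) ((↑((A * B)⁻¹) : Matrix (Fin n) (Fin n) S)ᵀ)
      = blockDiag2 S n (↑A) ((↑A⁻¹ : Matrix (Fin n) (Fin n) S)ᵀ) *
        blockDiag2 S n (↑B) ((↑B⁻¹ : Matrix (Fin n) (Fin n) S)ᵀ)
  rw [blockDiag2_mul, _root_.mul_inv_rev, Units.val_mul, Units.val_mul, Matrix.transpose_mul]

lemma hyp_inv (n : ℕ) (A : (Matrix (Fin n) (Fin n) S)ˣ) :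
    hypGL S n A⁻¹ = (hypGL S n A)⁻¹ := by
  apply Units.ext
  show blockDiag2 S n (↑A⁻¹) ((↑(A⁻¹)⁻¹ : Matrix (Fin n) (Fin n) S)ᵀ)
      = blockDiag2 S n (↑A⁻¹) ((↑A : Matrix (Fin n) (Fin n) S)ᵀ)
  rw [inv_inv]

lemma hypGL_elemGL (n : ℕ) (i j : Fin n) (hij : i ≠ j) (a : S) :
    hypGL S n (elemGL S n i j hij a)
      = symElemGL S n (cIdx0 n i) (cIdx0 n j) (c0_ne_c0 n hij) a := by
  apply Units.ext
  show blockDiag2 S n (1 + Matrix.single i j a) ((1 + Matrix.single i j (-a))ᵀ)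
      = symElemMat S n (cIdx0 n i) (cIdx0 n j) a
  rw [symA S n i j a hij, Matrix.transpose_add, Matrix.transpose_one,
    stdBasisMatrix_transpose, blockDiag2_add, blockDiag2_one, blockDiag2_split,
    blockDiag2_std0, blockDiag2_std1, stdBasisMatrix_neg]
  abel

lemma hypGL_elemGL' (n : ℕ) (i j : Fin n) (hij : i ≠ j) (a : S) :
    hypGL S n (elemGL S n j i (Ne.symm hij) (-a))
      = symElemGL S n (cIdx1 n i) (cIdx1 n j) (c1_ne_c1 n hij) a := by
  apply Units.ext
  show blockDiag2 S n (1 + Matrix.single j i (-a)) ((1 + Matrix.single j i (-(-a)))ᵀ)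
      = symElemMat S n (cIdx1 n i) (cIdx1 n j) a
  rw [symB S n i j a hij, neg_neg, Matrix.transpose_add, Matrix.transpose_one,
    stdBasisMatrix_transpose, blockDiag2_add, blockDiag2_one, blockDiag2_split,
    blockDiag2_std0, blockDiag2_std1, stdBasisMatrix_neg]
  abel

lemma symElemGL_mem (n : ℕ) (i j : Fin (2 * n)) (hij : i ≠ j) (a : S) :
    symElemGL S n i j hij a ∈ EpGroup S n :=
  Subgroup.subset_closure ⟨i, j, hij, a, rfl⟩

lemma hyp_mem_Ep (n : ℕ) (A : (Matrix (Fin n) (Fin n) S)ˣ) (hA : A ∈ ElementaryGroup S n) :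
    hypGL S n A ∈ EpGroup S n := by
  simp only [ElementaryGroup] at hA
  induction hA using Subgroup.closure_induction with
  | mem x hx =>
    obtain ⟨i, j, hij, r, rfl⟩ := hx
    rw [hypGL_elemGL]
    exact symElemGL_mem S n _ _ _ r
  | one => rw [hyp_one]; exact one_mem _
  | mul x y hx hy ihx ihy => rw [hyp_mul]; exact mul_mem ihx ihy
  | inv x hx ihx => rw [hyp_inv]; exact inv_mem ihx

lemma idx_cases (n : ℕ) (i : Fin (2 * n)) :
    (∃ p : Fin n, i = cIdx0 n p) ∨ (∃ p : Fin n, i = cIdx1 n p) := by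
  have hi := i.isLt
  by_cases h : (i : ℕ) < n
  · exact Or.inl ⟨⟨i, h⟩, Fin.ext rfl⟩
  · exact Or.inr ⟨⟨(i : ℕ) - n, by omega⟩, Fin.ext (by simp [cIdx1]; omega)⟩

lemma rel_mix1_units (n : ℕ) (i j k : Fin n) (hij : i ≠ j) (hik : i ≠ k) (hjk : j ≠ k)
    (a b : S) :
    symElemGL S n (cIdx0 n i) (cIdx0 n k) (c0_ne_c0 n hik) a *
      symElemGL S n (cIdx0 n k) (cIdx1 n j) (c0_ne_c1 n k j) b =
    symElemGL S n (cIdx0 n i) (cIdx1 n j) (c0_ne_c1 n i j) (a * b) *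
      (symElemGL S n (cIdx0 n k) (cIdx1 n j) (c0_ne_c1 n k j) b *
        symElemGL S n (cIdx0 n i) (cIdx0 n k) (c0_ne_c0 n hik) a) := by
  apply Units.ext
  show symElemMat S n (cIdx0 n i) (cIdx0 n k) a * symElemMat S n (cIdx0 n k) (cIdx1 n j) b =
    symElemMat S n (cIdx0 n i) (cIdx1 n j) (a * b) *
      (symElemMat S n (cIdx0 n k) (cIdx1 n j) b * symElemMat S n (cIdx0 n i) (cIdx0 n k) a)
  rw [symA S n i k a hik, symC S n k j b (Ne.symm hjk), symC S n i j (a * b) hij]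
  exact rel_mix1 S n i j k hij hik hjk a b

lemma rel_mix2_units (n : ℕ) (i j k : Fin n) (hij : i ≠ j) (hik : i ≠ k) (hjk : j ≠ k)
    (a b : S) :
    symElemGL S n (cIdx1 n i) (cIdx1 n k) (c1_ne_c1 n hik) a *
      symElemGL S n (cIdx1 n k) (cIdx0 n j) (c1_ne_c0 n k j) b =
    symElemGL S n (cIdx1 n i) (cIdx0 n j) (c1_ne_c0 n i j) (a * b) *
      (symElemGL S n (cIdx1 n k) (cIdx0 n j) (c1_ne_c0 n k j) b *
        symElemGL S n (cIdx1 n i) (cIdx1 n k) (c1_ne_c1 n hik) a) := by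
  apply Units.ext
  show symElemMat S n (cIdx1 n i) (cIdx1 n k) a * symElemMat S n (cIdx1 n k) (cIdx0 n j) b =
    symElemMat S n (cIdx1 n i) (cIdx0 n j) (a * b) *
      (symElemMat S n (cIdx1 n k) (cIdx0 n j) b * symElemMat S n (cIdx1 n i) (cIdx1 n k) a)
  rw [symB S n i k a hik, symD S n k j b (Ne.symm hjk), symD S n i j (a * b) hij]
  exact rel_mix2 S n i j k hij hik hjk a b

lemma rel_short1_units (n : ℕ) (i j : Fin n) (hij : i ≠ j) (a b : S) :
    symElemGL S n (cIdx0 n i) (cIdx0 n j) (c0_ne_c0 n hij) a *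
      symElemGL S n (cIdx0 n j) (cIdx1 n j) (c0_ne_c1 n j j) b =
    (symElemGL S n (cIdx0 n i) (cIdx1 n j) (c0_ne_c1 n i j) (a * b) *
        symElemGL S n (cIdx0 n i) (cIdx1 n i) (c0_ne_c1 n i i) (a * (a * b))) *
      (symElemGL S n (cIdx0 n j) (cIdx1 n j) (c0_ne_c1 n j j) b *
        symElemGL S n (cIdx0 n i) (cIdx0 n j) (c0_ne_c0 n hij) a) := by
  apply Units.ext
  show symElemMat S n (cIdx0 n i) (cIdx0 n j) a * symElemMat S n (cIdx0 n j) (cIdx1 n j) b =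
    (symElemMat S n (cIdx0 n i) (cIdx1 n j) (a * b) *
        symElemMat S n (cIdx0 n i) (cIdx1 n i) (a * (a * b))) *
      (symElemMat S n (cIdx0 n j) (cIdx1 n j) b * symElemMat S n (cIdx0 n i) (cIdx0 n j) a)
  rw [symA S n i j a hij, symS S n j b, symC S n i j (a * b) hij, symS S n i (a * (a * b))]
  exact rel_short1 S n i j hij a b

lemma rel_short2_units (n : ℕ) (i j : Fin n) (hij : i ≠ j) (a b : S) :
    symElemGL S n (cIdx1 n i) (cIdx1 n j) (c1_ne_c1 n hij) a *
      symElemGL S n (cIdx1 n j) (cIdx0 n j) (c1_ne_c0 n j j) b =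
    (symElemGL S n (cIdx1 n i) (cIdx0 n j) (c1_ne_c0 n i j) (a * b) *
        symElemGL S n (cIdx1 n i) (cIdx0 n i) (c1_ne_c0 n i i) (a * (a * b))) *
      (symElemGL S n (cIdx1 n j) (cIdx0 n j) (c1_ne_c0 n j j) b *
        symElemGL S n (cIdx1 n i) (cIdx1 n j) (c1_ne_c1 n hij) a) := by
  apply Units.ext
  show symElemMat S n (cIdx1 n i) (cIdx1 n j) a * symElemMat S n (cIdx1 n j) (cIdx0 n j) b =
    (symElemMat S n (cIdx1 n i) (cIdx0 n j) (a * b) *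
        symElemMat S n (cIdx1 n i) (cIdx0 n i) (a * (a * b))) *
      (symElemMat S n (cIdx1 n j) (cIdx0 n j) b * symElemMat S n (cIdx1 n i) (cIdx1 n j) a)
  rw [symB S n i j a hij, symT S n j b, symD S n i j (a * b) hij, symT S n i (a * (a * b))]
  exact rel_short2 S n i j hij a b

end Aux19


/-- The hyperbolic embedding `h(A) = diag(A, (Aᵀ)⁻¹)` maps `GL_n(R)`
into `Sp_{2n}(R)` and `E_n(R)` into `Ep_{2n}(R)`, and `Ep_{2n}(R)` is normally generated
by the hyperbolic image of `E_n(R)`. -/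
theorem statement19 (R : Type*) [CommRing R] (n : ℕ) (hn : 3 ≤ n) :
    (∀ A : (Matrix (Fin n) (Fin n) R)ˣ, hypGL R n A ∈ SpGroup R n) ∧
    (∀ A : (Matrix (Fin n) (Fin n) R)ˣ, A ∈ ElementaryGroup R n →
      hypGL R n A ∈ EpGroup R n) ∧
    Subgroup.normalClosure
      { x : ↥(EpGroup R n) | ∃ A ∈ ElementaryGroup R n, x.val = hypGL R n A } = ⊤ := by
  refine ⟨fun A => hyp_mem_Sp R n A, fun A hA => hyp_mem_Ep R n A hA, ?_⟩
  set N := Subgroup.normalClosure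
      { x : ↥(EpGroup R n) | ∃ A ∈ ElementaryGroup R n, x.val = hypGL R n A } with hNdef
  have hNn : N.Normal := Subgroup.normalClosure_normal
  have memA : ∀ (i j : Fin n) (hij : i ≠ j) (a : R) (y : ↥(EpGroup R n)),
      y.val = symElemGL R n (cIdx0 n i) (cIdx0 n j) (c0_ne_c0 n hij) a → y ∈ N := by
    intro i j hij a y hy
    exact Subgroup.subset_normalClosure
      ⟨elemGL R n i j hij a, elemGL_mem R n i j hij a, by rw [hypGL_elemGL]; exact hy⟩
  have memB : ∀ (i j : Fin n) (hij : i ≠ j) (a : R) (y : ↥(EpGroup R n)),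
      y.val = symElemGL R n (cIdx1 n i) (cIdx1 n j) (c1_ne_c1 n hij) a → y ∈ N := by
    intro i j hij a y hy
    exact Subgroup.subset_normalClosure
      ⟨elemGL R n j i (Ne.symm hij) (-a), elemGL_mem R n j i (Ne.symm hij) (-a),
        by rw [hypGL_elemGL' R n i j hij a]; exact hy⟩
  have commN : ∀ u v : ↥(EpGroup R n), u ∈ N → u * v * u⁻¹ * v⁻¹ ∈ N := by
    intro u v hu
    have h : u * v * u⁻¹ * v⁻¹ = u * (v * u⁻¹ * v⁻¹) := by group
    rw [h]
    exact mul_mem hu (hNn.conj_mem _ (inv_mem hu) v)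
  have memC : ∀ (i j : Fin n) (hij : i ≠ j) (a : R) (y : ↥(EpGroup R n)),
      y.val = symElemGL R n (cIdx0 n i) (cIdx1 n j) (c0_ne_c1 n i j) a → y ∈ N := by
    intro i j hij a y hy
    obtain ⟨k, hki, hkj⟩ := exists_third n hn i j
    set U : ↥(EpGroup R n) :=
      ⟨symElemGL R n (cIdx0 n i) (cIdx0 n k) (c0_ne_c0 n (Ne.symm hki)) a,
        symElemGL_mem R n _ _ _ a⟩ with hU
    set V : ↥(EpGroup R n) :=
      ⟨symElemGL R n (cIdx0 n k) (cIdx1 n j) (c0_ne_c1 n k j) 1,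
        symElemGL_mem R n _ _ _ 1⟩ with hV
    have hUN : U ∈ N := memA i k (Ne.symm hki) a U rfl
    have hrel : U * V = y * (V * U) := by
      apply Subtype.ext
      show U.val * V.val = y.val * (V.val * U.val)
      rw [hy, show symElemGL R n (cIdx0 n i) (cIdx1 n j) (c0_ne_c1 n i j) a
          = symElemGL R n (cIdx0 n i) (cIdx1 n j) (c0_ne_c1 n i j) (a * 1) from by
            rw [mul_one]]
      exact rel_mix1_units R n i j k hij (Ne.symm hki) (Ne.symm hkj) a 1
    have hw : y = U * V * U⁻¹ * V⁻¹ := comm_of_rel hrel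
    rw [hw]
    exact commN U V hUN
  have memD : ∀ (i j : Fin n) (hij : i ≠ j) (a : R) (y : ↥(EpGroup R n)),
      y.val = symElemGL R n (cIdx1 n i) (cIdx0 n j) (c1_ne_c0 n i j) a → y ∈ N := by
    intro i j hij a y hy
    obtain ⟨k, hki, hkj⟩ := exists_third n hn i j
    set U : ↥(EpGroup R n) :=
      ⟨symElemGL R n (cIdx1 n i) (cIdx1 n k) (c1_ne_c1 n (Ne.symm hki)) a,
        symElemGL_mem R n _ _ _ a⟩ with hU
    set V : ↥(EpGroup R n) :=
      ⟨symElemGL R n (cIdx1 n k) (cIdx0 n j) (c1_ne_c0 n k j) 1,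
        symElemGL_mem R n _ _ _ 1⟩ with hV
    have hUN : U ∈ N := memB i k (Ne.symm hki) a U rfl
    have hrel : U * V = y * (V * U) := by
      apply Subtype.ext
      show U.val * V.val = y.val * (V.val * U.val)
      rw [hy, show symElemGL R n (cIdx1 n i) (cIdx0 n j) (c1_ne_c0 n i j) a
          = symElemGL R n (cIdx1 n i) (cIdx0 n j) (c1_ne_c0 n i j) (a * 1) from by
            rw [mul_one]]
      exact rel_mix2_units R n i j k hij (Ne.symm hki) (Ne.symm hkj) a 1
    have hw : y = U * V * U⁻¹ * V⁻¹ := comm_of_rel hrel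
    rw [hw]
    exact commN U V hUN
  have memS : ∀ (i : Fin n) (a : R) (y : ↥(EpGroup R n)),
      y.val = symElemGL R n (cIdx0 n i) (cIdx1 n i) (c0_ne_c1 n i i) a → y ∈ N := by
    intro i a y hy
    obtain ⟨j, hji, -⟩ := exists_third n hn i i
    set U : ↥(EpGroup R n) :=
      ⟨symElemGL R n (cIdx0 n i) (cIdx0 n j) (c0_ne_c0 n (Ne.symm hji)) 1,
        symElemGL_mem R n _ _ _ 1⟩ with hU
    set V : ↥(EpGroup R n) :=
      ⟨symElemGL R n (cIdx0 n j) (cIdx1 n j) (c0_ne_c1 n j j) a,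
        symElemGL_mem R n _ _ _ a⟩ with hV
    set W : ↥(EpGroup R n) :=
      ⟨symElemGL R n (cIdx0 n i) (cIdx1 n j) (c0_ne_c1 n i j) (1 * a),
        symElemGL_mem R n _ _ _ (1 * a)⟩ with hW
    have hUN : U ∈ N := memA i j (Ne.symm hji) 1 U rfl
    have hWN : W ∈ N := memC i j (Ne.symm hji) (1 * a) W rfl
    have hrel : U * V = (W * y) * (V * U) := by
      apply Subtype.ext
      show U.val * V.val = (W.val * y.val) * (V.val * U.val)
      rw [hy, show symElemGL R n (cIdx0 n i) (cIdx1 n i) (c0_ne_c1 n i i) a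
          = symElemGL R n (cIdx0 n i) (cIdx1 n i) (c0_ne_c1 n i i) (1 * (1 * a)) from by
            rw [one_mul, one_mul]]
      exact rel_short1_units R n i j (Ne.symm hji) 1 a
    have hcomm : W * y = U * V * U⁻¹ * V⁻¹ := comm_of_rel hrel
    rw [show y = W⁻¹ * (W * y) from (inv_mul_cancel_left W y).symm, hcomm]
    exact mul_mem (inv_mem hWN) (commN U V hUN)
  have memT : ∀ (i : Fin n) (a : R) (y : ↥(EpGroup R n)),
      y.val = symElemGL R n (cIdx1 n i) (cIdx0 n i) (c1_ne_c0 n i i) a → y ∈ N := by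
    intro i a y hy
    obtain ⟨j, hji, -⟩ := exists_third n hn i i
    set U : ↥(EpGroup R n) :=
      ⟨symElemGL R n (cIdx1 n i) (cIdx1 n j) (c1_ne_c1 n (Ne.symm hji)) 1,
        symElemGL_mem R n _ _ _ 1⟩ with hU
    set V : ↥(EpGroup R n) :=
      ⟨symElemGL R n (cIdx1 n j) (cIdx0 n j) (c1_ne_c0 n j j) a,
        symElemGL_mem R n _ _ _ a⟩ with hV
    set W : ↥(EpGroup R n) :=
      ⟨symElemGL R n (cIdx1 n i) (cIdx0 n j) (c1_ne_c0 n i j) (1 * a),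
        symElemGL_mem R n _ _ _ (1 * a)⟩ with hW
    have hUN : U ∈ N := memB i j (Ne.symm hji) 1 U rfl
    have hWN : W ∈ N := memD i j (Ne.symm hji) (1 * a) W rfl
    have hrel : U * V = (W * y) * (V * U) := by
      apply Subtype.ext
      show U.val * V.val = (W.val * y.val) * (V.val * U.val)
      rw [hy, show symElemGL R n (cIdx1 n i) (cIdx0 n i) (c1_ne_c0 n i i) a
          = symElemGL R n (cIdx1 n i) (cIdx0 n i) (c1_ne_c0 n i i) (1 * (1 * a)) from by
            rw [one_mul, one_mul]]
      exact rel_short2_units R n i j (Ne.symm hji) 1 a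
    have hcomm : W * y = U * V * U⁻¹ * V⁻¹ := comm_of_rel hrel
    rw [show y = W⁻¹ * (W * y) from (inv_mul_cancel_left W y).symm, hcomm]
    exact mul_mem (inv_mem hWN) (commN U V hUN)
  rw [eq_top_iff]
  rintro x -
  have main : ∀ g (hg : g ∈ EpGroup R n), (⟨g, hg⟩ : ↥(EpGroup R n)) ∈ N := by
    intro g hg
    induction hg using Subgroup.closure_induction with
    | mem g' hx =>
      obtain ⟨I, J, hIJ, a, rfl⟩ := hx
      rcases idx_cases n I with ⟨p, rfl⟩ | ⟨p, rfl⟩ <;>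
        rcases idx_cases n J with ⟨q, rfl⟩ | ⟨q, rfl⟩
      · exact memA p q (fun h => hIJ (congrArg (cIdx0 n) h)) a _ rfl
      · by_cases hpq : p = q
        · subst hpq; exact memS p a _ rfl
        · exact memC p q hpq a _ rfl
      · by_cases hpq : p = q
        · subst hpq; exact memT p a _ rfl
        · exact memD p q hpq a _ rfl
      · exact memB p q (fun h => hIJ (congrArg (cIdx1 n) h)) a _ rfl
    | one => exact one_mem N
    | mul u v hu hv ihu ihv => exact mul_mem ihu ihv
    | inv u hu ihu => exact inv_mem ihu
  exact main x.val x.2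


end Paper
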